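/- arXiv:2410.04530 — 2 statements merged into one kernel-verified Lean document; each statement's English description precedes it below -/
import Mathlib

section
/- Let N ≥ 5 and -2 < γ < 0. The function U(x) = C_{N,γ} (1 + |x|^{2+γ})^{-(N-4-γ)/(2+γ)}, with C_{N,γ} = [(N-4-γ)(N-2)(N+γ)(N+2+2γ)]^{(N-4-γ)/(4(2+γ))}, is a positive radial solution of the weighted fourth-order equation Δ(|x|^{-γ} Δ u) = |x|^γ u^{(N+4+3γ)/(N-4-γ)} on ℝ^N \ {0}. -/
open MeasureTheory Real Filter
open scoped RealInnerProductSpace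

noncomputable def lap {N : ℕ} (u : EuclideanSpace ℝ (Fin N) → ℝ)
    (x : EuclideanSpace ℝ (Fin N)) : ℝ :=
  ∑ i : Fin N, fderiv ℝ (fun y => fderiv ℝ u y (EuclideanSpace.single i 1)) x
      (EuclideanSpace.single i 1)

lemma lap_radial {N : ℕ} (u : EuclideanSpace ℝ (Fin N) → ℝ) (f f1 f2 : ℝ → ℝ)
    (S : Set ℝ) (hS : IsOpen S)
    (hu : ∀ y : EuclideanSpace ℝ (Fin N), ‖y‖ ^ 2 ∈ S → u y = f (‖y‖ ^ 2))
    (hf : ∀ s ∈ S, HasDerivAt f (f1 s) s)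
    (hf1 : ∀ s ∈ S, HasDerivAt f1 (f2 s) s)
    (x : EuclideanSpace ℝ (Fin N)) (hx : ‖x‖ ^ 2 ∈ S) :
    lap u x = 4 * ‖x‖ ^ 2 * f2 (‖x‖ ^ 2) + 2 * N * f1 (‖x‖ ^ 2) := by
  have hQcont : Continuous fun y : EuclideanSpace ℝ (Fin N) => ‖y‖ ^ 2 :=
    (continuous_norm).pow 2
  set T : Set (EuclideanSpace ℝ (Fin N)) := (fun y => ‖y‖ ^ 2) ⁻¹' S with hT
  have hTopen : IsOpen T := hS.preimage hQcont
  have hxT : x ∈ T := hx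
  have hud : ∀ y ∈ T, HasFDerivAt u (f1 (‖y‖ ^ 2) • (2 • (innerSL ℝ y))) y := by
    intro y hy
    have h1 : HasFDerivAt (fun z : EuclideanSpace ℝ (Fin N) => f (‖z‖ ^ 2))
        (f1 (‖y‖ ^ 2) • (2 • (innerSL ℝ y))) y :=
      (hf _ hy).comp_hasFDerivAt y (hasFDerivAt_id y).norm_sq
    refine h1.congr_of_eventuallyEq ?_
    filter_upwards [hTopen.mem_nhds hy] with z hz
    exact hu z hz
  have hfd : ∀ y ∈ T, fderiv ℝ u y = f1 (‖y‖ ^ 2) • (2 • (innerSL ℝ y)) := fun y hy =>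
    (hud y hy).fderiv
  have key : ∀ i : Fin N,
      fderiv ℝ (fun y => fderiv ℝ u y (EuclideanSpace.single i 1)) x (EuclideanSpace.single i 1)
        = 4 * f2 (‖x‖ ^ 2) * (x i * x i) + 2 * f1 (‖x‖ ^ 2) := by
    intro i
    have happ : ∀ y ∈ T, fderiv ℝ u y (EuclideanSpace.single i 1)
        = f1 (‖y‖ ^ 2) * (2 * y i) := by
      intro y hy
      rw [hfd y hy]
      simp [real_inner_smul_left, EuclideanSpace.inner_single_right]
    have hA : HasFDerivAt (fun y : EuclideanSpace ℝ (Fin N) => f1 (‖y‖ ^ 2))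
        (f2 (‖x‖ ^ 2) • (2 • (innerSL ℝ x))) x :=
      (hf1 _ hx).comp_hasFDerivAt x (hasFDerivAt_id x).norm_sq
    have hB : HasFDerivAt (fun y : EuclideanSpace ℝ (Fin N) => 2 * y i)
        ((2 : ℝ) • (EuclideanSpace.proj (𝕜 := ℝ) i)) x := by
      exact ((EuclideanSpace.proj (𝕜 := ℝ) i).hasFDerivAt (x := x)).const_smul (2 : ℝ)
    have hg := hA.mul' hB
    have heq : (fun y => fderiv ℝ u y (EuclideanSpace.single i 1)) =ᶠ[nhds x]
        (fun y : EuclideanSpace ℝ (Fin N) => f1 (‖y‖ ^ 2) * (2 * y i)) := by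
      filter_upwards [hTopen.mem_nhds hxT] with z hz using happ z hz
    have hphi := hg.congr_of_eventuallyEq heq
    rw [hphi.fderiv]
    have hs : (innerSL ℝ x) (EuclideanSpace.single i 1) = x i := by
      simp [EuclideanSpace.inner_single_right]
    simp [ContinuousLinearMap.add_apply, ContinuousLinearMap.smul_apply,
      ContinuousLinearMap.smulRight_apply, hs, EuclideanSpace.single_apply]
    ring
  have hnorm : ∑ i : Fin N, x i * x i = ‖x‖ ^ 2 := by
    rw [EuclideanSpace.norm_eq, sq_sqrt (by positivity)]
    simp [Real.norm_eq_abs, sq_abs, sq]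
  rw [lap]
  simp only [key]
  rw [Finset.sum_add_distrib, ← Finset.mul_sum, hnorm, Finset.sum_const, Finset.card_univ,
    Fintype.card_fin, nsmul_eq_mul]
  ring

lemma lap_radial_rpow {N : ℕ} (u : EuclideanSpace ℝ (Fin N) → ℝ)
    (G G1 G2 : ℝ → ℝ) (β : ℝ)
    (hu : ∀ y : EuclideanSpace ℝ (Fin N), y ≠ 0 → u y = G ((‖y‖ ^ 2) ^ β))
    (hG : ∀ t : ℝ, 0 < t → HasDerivAt G (G1 t) t)
    (hG1 : ∀ t : ℝ, 0 < t → HasDerivAt G1 (G2 t) t)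
    (x : EuclideanSpace ℝ (Fin N)) (hx : x ≠ 0) :
    lap u x = (‖x‖ ^ 2) ^ (β - 1) *
      (4 * β ^ 2 * ((‖x‖ ^ 2) ^ β * G2 ((‖x‖ ^ 2) ^ β))
        + ((4 * β - 4 + 2 * (N : ℝ)) * β) * G1 ((‖x‖ ^ 2) ^ β)) := by
  have hxn : 0 < ‖x‖ := norm_pos_iff.mpr hx
  have hs0 : (0:ℝ) < ‖x‖ ^ 2 := by positivity
  have hd1 : ∀ s ∈ Set.Ioi (0:ℝ), HasDerivAt (fun s : ℝ => G (s ^ β))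
      (G1 (s ^ β) * (β * s ^ (β - 1))) s := by
    intro s hs
    exact (hG _ (Real.rpow_pos_of_pos hs β)).comp s
      (Real.hasDerivAt_rpow_const (Or.inl (ne_of_gt hs)))
  have hd2 : ∀ s ∈ Set.Ioi (0:ℝ), HasDerivAt (fun s : ℝ => G1 (s ^ β) * (β * s ^ (β - 1)))
      (G2 (s ^ β) * (β * s ^ (β - 1)) * (β * s ^ (β - 1))
        + G1 (s ^ β) * (β * ((β - 1) * s ^ (β - 1 - 1)))) s := by
    intro s hs
    have ha : HasDerivAt (fun s : ℝ => G1 (s ^ β)) (G2 (s ^ β) * (β * s ^ (β - 1))) s :=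
      (hG1 _ (Real.rpow_pos_of_pos hs β)).comp s
        (Real.hasDerivAt_rpow_const (Or.inl (ne_of_gt hs)))
    have hb : HasDerivAt (fun r : ℝ => β * r ^ (β - 1)) (β * ((β - 1) * s ^ (β - 1 - 1))) s :=
      (Real.hasDerivAt_rpow_const (Or.inl (ne_of_gt hs))).const_mul β
    exact ha.mul hb
  have h := lap_radial u (fun s => G (s ^ β)) (fun s => G1 (s ^ β) * (β * s ^ (β - 1)))
    (fun s => G2 (s ^ β) * (β * s ^ (β - 1)) * (β * s ^ (β - 1))
      + G1 (s ^ β) * (β * ((β - 1) * s ^ (β - 1 - 1))))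
    (Set.Ioi 0) isOpen_Ioi
    (fun y hy => hu y (by
      intro h0
      rw [h0] at hy
      simp at hy))
    hd1 hd2 x hs0
  rw [h]
  set s := ‖x‖ ^ 2
  have h2 : s ^ (β - 1 - 1) = s ^ β / s / s := by
    rw [Real.rpow_sub hs0, Real.rpow_sub hs0, Real.rpow_one]
  have h1 : s ^ (β - 1) = s ^ β / s := by
    rw [Real.rpow_sub hs0, Real.rpow_one]
  simp only [h2, h1]
  field_simp
  ring

noncomputable def rad (c m : ℝ) (t : ℝ) : ℝ := c * (1 + t) ^ m

lemma hasDerivAt_rad (c m c' m' t : ℝ) (ht : 0 < 1 + t) (hc : c' = c * m) (hm : m' = m - 1) :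
    HasDerivAt (rad c m) (rad c' m' t) t := by
  subst hc hm
  have h1 : HasDerivAt (fun u : ℝ => 1 + u) 1 t := by
    simpa using (hasDerivAt_id t).const_add (1 : ℝ)
  have h2 := ((Real.hasDerivAt_rpow_const (p := m) (Or.inl (ne_of_gt ht))).comp t h1).const_mul c
  unfold rad
  exact h2.congr_deriv (by ring)

noncomputable def Hrad (C α β n : ℝ) (t : ℝ) : ℝ :=
  4 * β ^ 2 * (t * rad (C * -α * (-α - 1)) (-α - 2) t)
    + (4 * β - 4 + 2 * n) * β * rad (C * -α) (-α - 1) t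

noncomputable def Hrad1 (C α β n : ℝ) (t : ℝ) : ℝ :=
  4 * β ^ 2 * (1 * rad (C * -α * (-α - 1)) (-α - 2) t
      + t * rad (C * -α * (-α - 1) * (-α - 2)) (-α - 3) t)
    + (4 * β - 4 + 2 * n) * β * rad (C * -α * (-α - 1)) (-α - 2) t

noncomputable def Hrad2 (C α β n : ℝ) (t : ℝ) : ℝ :=
  4 * β ^ 2 * ((1 * rad (C * -α * (-α - 1) * (-α - 2)) (-α - 3) t
      + (1 * rad (C * -α * (-α - 1) * (-α - 2)) (-α - 3) t
        + t * rad (C * -α * (-α - 1) * (-α - 2) * (-α - 3)) (-α - 4) t)))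
    + (4 * β - 4 + 2 * n) * β * rad (C * -α * (-α - 1) * (-α - 2)) (-α - 3) t

lemma hasDerivAt_Hrad (C α β n t : ℝ) (ht : 0 < 1 + t) :
    HasDerivAt (Hrad C α β n) (Hrad1 C α β n t) t := by
  have hF1 : HasDerivAt (rad (C * -α) (-α - 1)) (rad (C * -α * (-α - 1)) (-α - 2) t) t :=
    hasDerivAt_rad _ _ _ _ t ht (by ring) (by ring)
  have hF2 : HasDerivAt (rad (C * -α * (-α - 1)) (-α - 2))
      (rad (C * -α * (-α - 1) * (-α - 2)) (-α - 3) t) t :=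
    hasDerivAt_rad _ _ _ _ t ht (by ring) (by ring)
  exact (((hasDerivAt_id t).mul hF2).const_mul (4 * β ^ 2)).add
    (hF1.const_mul ((4 * β - 4 + 2 * n) * β))

lemma hasDerivAt_Hrad1 (C α β n t : ℝ) (ht : 0 < 1 + t) :
    HasDerivAt (Hrad1 C α β n) (Hrad2 C α β n t) t := by
  have hF2 : HasDerivAt (rad (C * -α * (-α - 1)) (-α - 2))
      (rad (C * -α * (-α - 1) * (-α - 2)) (-α - 3) t) t :=
    hasDerivAt_rad _ _ _ _ t ht (by ring) (by ring)
  have hF3 : HasDerivAt (rad (C * -α * (-α - 1) * (-α - 2)) (-α - 3))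
      (rad (C * -α * (-α - 1) * (-α - 2) * (-α - 3)) (-α - 4) t) t :=
    hasDerivAt_rad _ _ _ _ t ht (by ring) (by ring)
  exact (((hF2.const_mul 1).add ((hasDerivAt_id t).mul hF3)).const_mul (4 * β ^ 2)).add
    (hF2.const_mul ((4 * β - 4 + 2 * n) * β))

lemma key_identity (n γ q C K α β : ℝ) (h2γ : 0 < 2 + γ) (hng : 0 < n - 4 - γ)
    (hα : α = (n - 4 - γ) / (2 + γ)) (hβ : β = (2 + γ) / 2)
    (hq : q = (n + 4 + 3 * γ) / (n - 4 - γ))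
    (hK : K = (n - 4 - γ) * (n - 2) * (n + γ) * (n + 2 + 2 * γ))
    (hCq : C ^ q = C * K) (hC : 0 < C)
    (t : ℝ) (ht : 0 < t) :
    4 * β ^ 2 * (t * Hrad2 C α β n t) + (4 * β - 4 + 2 * n) * β * Hrad1 C α β n t
      = (rad C (-α) t) ^ q := by
  have h1t : (0:ℝ) < 1 + t := by linarith
  have hFq : (rad C (-α) t) ^ q = C * K * (1 + t) ^ (-α - 4) := by
    unfold rad
    rw [Real.mul_rpow hC.le (Real.rpow_nonneg h1t.le _), hCq, ← Real.rpow_mul h1t.le]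
    rw [show -α * q = -α - 4 by
      rw [hα, hq]; field_simp; ring]
  rw [hFq]
  have e3 : (1 + t) ^ (-α - 3) = (1 + t) ^ (-α - 4) * (1 + t) := by
    rw [show -α - 3 = -α - 4 + 1 by ring, Real.rpow_add h1t, Real.rpow_one]
  have e2 : (1 + t) ^ (-α - 2) = (1 + t) ^ (-α - 4) * ((1 + t) * (1 + t)) := by
    rw [show -α - 2 = -α - 4 + 1 + 1 by ring, Real.rpow_add h1t, Real.rpow_add h1t,
      Real.rpow_one]
    ring
  unfold Hrad2 Hrad1 rad
  rw [e2, e3]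
  subst hα hβ hK
  field_simp
  ring

/-- the explicit radial function `U` is a positive radial solution of the
weighted fourth-order equation `Δ(|x|^{-γ} Δ u) = |x|^γ u^{(N+4+3γ)/(N-4-γ)}` on `ℝ^N \ {0}`. -/
theorem stmt0 (N : ℕ) (hN : 5 ≤ N) (γ : ℝ) (hγ1 : -2 < γ) (hγ2 : γ < 0)
    (q C : ℝ)
    (hq : q = ((N : ℝ) + 4 + 3 * γ) / ((N : ℝ) - 4 - γ))
    (hC : C = (((N : ℝ) - 4 - γ) * ((N : ℝ) - 2) * ((N : ℝ) + γ) * ((N : ℝ) + 2 + 2 * γ)) ^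
        (((N : ℝ) - 4 - γ) / (4 * (2 + γ))))
    (U : EuclideanSpace ℝ (Fin N) → ℝ)
    (hU : ∀ x, U x = C * (1 + ‖x‖ ^ (2 + γ)) ^ (-(((N : ℝ) - 4 - γ) / (2 + γ)))) :
    (∀ x, 0 < U x) ∧
    (∀ x y : EuclideanSpace ℝ (Fin N), ‖x‖ = ‖y‖ → U x = U y) ∧
    (∀ x : EuclideanSpace ℝ (Fin N), x ≠ 0 →
      lap (fun y => ‖y‖ ^ (-γ) * lap U y) x = ‖x‖ ^ γ * U x ^ q) := by
  have hN5 : (5:ℝ) ≤ (N:ℝ) := by exact_mod_cast hN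
  have h2γ : (0:ℝ) < 2 + γ := by linarith
  have hng : (0:ℝ) < (N:ℝ) - 4 - γ := by linarith
  have hKpos : (0:ℝ) < ((N:ℝ) - 4 - γ) * ((N:ℝ) - 2) * ((N:ℝ) + γ) * ((N:ℝ) + 2 + 2 * γ) :=
    mul_pos (mul_pos (mul_pos hng (by linarith)) (by linarith)) (by linarith)
  have hCpos : 0 < C := by rw [hC]; exact Real.rpow_pos_of_pos hKpos _
  refine ⟨?_, ?_, ?_⟩
  · intro x
    rw [hU]
    have hb : (0:ℝ) < 1 + ‖x‖ ^ (2 + γ) := by positivity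
    exact mul_pos hCpos (Real.rpow_pos_of_pos hb _)
  · intro x y h
    rw [hU, hU, h]
  · intro x hx
    have hxn : 0 < ‖x‖ := norm_pos_iff.mpr hx
    set α := ((N:ℝ) - 4 - γ) / (2 + γ) with hα
    set β := (2 + γ) / 2 with hβ
    set K := ((N:ℝ) - 4 - γ) * ((N:ℝ) - 2) * ((N:ℝ) + γ) * ((N:ℝ) + 2 + 2 * γ) with hK
    have hCq : C ^ q = C * K := by
      rw [hC, ← Real.rpow_mul hKpos.le,
        show ((N:ℝ) - 4 - γ) / (4 * (2 + γ)) * q = ((N:ℝ) - 4 - γ) / (4 * (2 + γ)) + 1 by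
          rw [hq]; field_simp; ring,
        Real.rpow_add hKpos, Real.rpow_one]
    have hnormpow : ∀ y : EuclideanSpace ℝ (Fin N), ‖y‖ ^ (2 + γ) = (‖y‖ ^ 2) ^ β := by
      intro y
      rw [← Real.rpow_natCast ‖y‖ 2, ← Real.rpow_mul (norm_nonneg y)]
      congr 1
      rw [hβ]; push_cast; ring
    have hγpow : ∀ y : EuclideanSpace ℝ (Fin N), (‖y‖ ^ 2) ^ (β - 1) = ‖y‖ ^ γ := by
      intro y
      rw [← Real.rpow_natCast ‖y‖ 2, ← Real.rpow_mul (norm_nonneg y)]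
      congr 1
      rw [hβ]; push_cast; ring
    have hUeq : ∀ y : EuclideanSpace ℝ (Fin N), y ≠ 0 →
        U y = rad C (-α) ((‖y‖ ^ 2) ^ β) := by
      intro y _
      rw [hU y, hnormpow y]
      rfl
    have hGd : ∀ t : ℝ, 0 < t → HasDerivAt (rad C (-α)) (rad (C * -α) (-α - 1) t) t :=
      fun t ht => hasDerivAt_rad _ _ _ _ t (by linarith) (by ring) (by ring)
    have hG1d : ∀ t : ℝ, 0 < t →
        HasDerivAt (rad (C * -α) (-α - 1)) (rad (C * -α * (-α - 1)) (-α - 2) t) t :=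
      fun t ht => hasDerivAt_rad _ _ _ _ t (by linarith) (by ring) (by ring)
    have hlapU : ∀ y : EuclideanSpace ℝ (Fin N), y ≠ 0 →
        lap U y = (‖y‖ ^ 2) ^ (β - 1) * Hrad C α β N ((‖y‖ ^ 2) ^ β) := by
      intro y hy
      rw [lap_radial_rpow U (rad C (-α)) (rad (C * -α) (-α - 1))
        (rad (C * -α * (-α - 1)) (-α - 2)) β hUeq hGd hG1d y hy]
      congr 1
    have hVeq : ∀ y : EuclideanSpace ℝ (Fin N), y ≠ 0 →
        ‖y‖ ^ (-γ) * lap U y = Hrad C α β N ((‖y‖ ^ 2) ^ β) := by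
      intro y hy
      have hyn : 0 < ‖y‖ := norm_pos_iff.mpr hy
      rw [hlapU y hy, ← mul_assoc, hγpow y, ← Real.rpow_add hyn]
      norm_num
    have hHd : ∀ t : ℝ, 0 < t → HasDerivAt (Hrad C α β N) (Hrad1 C α β N t) t :=
      fun t ht => hasDerivAt_Hrad C α β N t (by linarith)
    have hH1d : ∀ t : ℝ, 0 < t → HasDerivAt (Hrad1 C α β N) (Hrad2 C α β N t) t :=
      fun t ht => hasDerivAt_Hrad1 C α β N t (by linarith)
    rw [lap_radial_rpow (fun y => ‖y‖ ^ (-γ) * lap U y) (Hrad C α β N) (Hrad1 C α β N)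
      (Hrad2 C α β N) β hVeq hHd hH1d x hx]
    have hT : (0:ℝ) < (‖x‖ ^ 2) ^ β := Real.rpow_pos_of_pos (pow_pos hxn 2) β
    rw [key_identity (N:ℝ) γ q C K α β h2γ hng hα hβ hq hK hCq hCpos _ hT]
    rw [hUeq x hx, hγpow x]
end

section
/- Let N ≥ 2 and a ∈ ℝ with a ≠ (N−4)/2 and a satisfying (−2−√(N²−2N+2))/2 ≤ a ≤ (−2+√(N²−2N+2))/2. Then inf_{k ∈ ℕ} (k + N/2 + a)²(k + (N−4)/2 − a)² · (2/(N−4−2a))² = ((N+2a)/2)², with the infimum attained at k = 0. -/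
/-- the infimum over `k ∈ ℕ` of
`(k + N/2 + a)²(k + (N−4)/2 − a)² (2/(N−4−2a))²` equals `((N+2a)/2)²`,
attained at `k = 0`, in the stated range of `a`. -/
theorem stmt13 (N : ℕ) (hN : 2 ≤ N) (a : ℝ) (ha : a ≠ ((N : ℝ) - 4) / 2)
    (ha1 : (-2 - Real.sqrt ((N : ℝ) ^ 2 - 2 * (N : ℝ) + 2)) / 2 ≤ a)
    (ha2 : a ≤ (-2 + Real.sqrt ((N : ℝ) ^ 2 - 2 * (N : ℝ) + 2)) / 2) :
    (⨅ k : ℕ, ((k : ℝ) + (N : ℝ) / 2 + a) ^ 2 * ((k : ℝ) + ((N : ℝ) - 4) / 2 - a) ^ 2 *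
        (2 / ((N : ℝ) - 4 - 2 * a)) ^ 2) = (((N : ℝ) + 2 * a) / 2) ^ 2 ∧
    ((0 : ℝ) + (N : ℝ) / 2 + a) ^ 2 * ((0 : ℝ) + ((N : ℝ) - 4) / 2 - a) ^ 2 *
        (2 / ((N : ℝ) - 4 - 2 * a)) ^ 2 = (((N : ℝ) + 2 * a) / 2) ^ 2 := by
  have hNR : (2 : ℝ) ≤ (N : ℝ) := by exact_mod_cast hN
  have hd : (N : ℝ) - 4 - 2 * a ≠ 0 := by
    intro h; apply ha; linarith
  -- the range hypothesis squared
  have harg : (0 : ℝ) ≤ (N : ℝ) ^ 2 - 2 * (N : ℝ) + 2 := by nlinarith [sq_nonneg ((N:ℝ) - 1)]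
  have hs : Real.sqrt ((N : ℝ) ^ 2 - 2 * (N : ℝ) + 2) ^ 2
      = (N : ℝ) ^ 2 - 2 * (N : ℝ) + 2 := Real.sq_sqrt harg
  set s := Real.sqrt ((N : ℝ) ^ 2 - 2 * (N : ℝ) + 2) with hsdef
  have hsq : (2 * a + 2) ^ 2 ≤ (N : ℝ) ^ 2 - 2 * (N : ℝ) + 2 := by
    have h1 : -s ≤ 2 * a + 2 := by linarith
    have h2 : 2 * a + 2 ≤ s := by linarith
    calc (2 * a + 2) ^ 2 ≤ s ^ 2 := sq_le_sq' h1 h2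
      _ = _ := hs
  -- value at 0
  have h0 : ((0 : ℝ) + (N : ℝ) / 2 + a) ^ 2 * ((0 : ℝ) + ((N : ℝ) - 4) / 2 - a) ^ 2 *
      (2 / ((N : ℝ) - 4 - 2 * a)) ^ 2 = (((N : ℝ) + 2 * a) / 2) ^ 2 := by
    field_simp
    ring
  -- lower bound
  have key : ∀ k : ℕ, (((N : ℝ) + 2 * a) / 2) ^ 2 ≤
      ((k : ℝ) + (N : ℝ) / 2 + a) ^ 2 * ((k : ℝ) + ((N : ℝ) - 4) / 2 - a) ^ 2 *
        (2 / ((N : ℝ) - 4 - 2 * a)) ^ 2 := by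
    intro k
    have hd2 : (0 : ℝ) < ((N : ℝ) - 4 - 2 * a) ^ 2 := by positivity
    rcases Nat.eq_zero_or_pos k with hk | hk
    · subst hk; push_cast; rw [h0]
    · have hk1 : (1 : ℝ) ≤ (k : ℝ) := by exact_mod_cast hk
      rw [← sub_nonneg]
      have heq : ((k : ℝ) + (N : ℝ) / 2 + a) ^ 2 * ((k : ℝ) + ((N : ℝ) - 4) / 2 - a) ^ 2 *
          (2 / ((N : ℝ) - 4 - 2 * a)) ^ 2 - (((N : ℝ) + 2 * a) / 2) ^ 2 =
          ((((k : ℝ) + (N : ℝ) / 2 + a) * ((k : ℝ) + ((N : ℝ) - 4) / 2 - a)) ^ 2 -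
            (((N : ℝ) / 2 + a) * (((N : ℝ) - 4) / 2 - a)) ^ 2) * (2 / ((N : ℝ) - 4 - 2 * a)) ^ 2 := by
        field_simp
      rw [heq]
      apply mul_nonneg _ (by positivity)
      set P : ℝ := ((k : ℝ) + (N : ℝ) / 2 + a) * ((k : ℝ) + ((N : ℝ) - 4) / 2 - a) with hP
      set Q : ℝ := ((N : ℝ) / 2 + a) * (((N : ℝ) - 4) / 2 - a) with hQ
      have hA : 0 ≤ P - Q := by
        have : P - Q = (k : ℝ) * ((k : ℝ) + (N : ℝ) - 2) := by rw [hP, hQ]; ring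
        rw [this]
        apply mul_nonneg (by positivity)
        linarith
      have hB : 0 ≤ P + Q := by
        have h2 : (0:ℝ) ≤ ((k:ℝ) - 1) * ((k:ℝ) + (N:ℝ) - 2) := by
          apply mul_nonneg <;> linarith
        have h3 : P + Q = (k:ℝ)^2 + ((N:ℝ) - 2) * (k:ℝ) + 2 * Q := by rw [hP, hQ]; ring
        rw [h3, hQ]; nlinarith [hsq, h2, hk1]
      have hfac : P ^ 2 - Q ^ 2 = (P - Q) * (P + Q) := by ring
      rw [hfac]
      exact mul_nonneg hA hB
  refine ⟨le_antisymm ?_ (le_ciInf key), h0⟩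
  have hbdd : BddBelow (Set.range fun k : ℕ =>
      ((k : ℝ) + (N : ℝ) / 2 + a) ^ 2 * ((k : ℝ) + ((N : ℝ) - 4) / 2 - a) ^ 2 *
        (2 / ((N : ℝ) - 4 - 2 * a)) ^ 2) :=
    ⟨(((N : ℝ) + 2 * a) / 2) ^ 2, Set.forall_mem_range.2 key⟩
  calc (⨅ k : ℕ, ((k : ℝ) + (N : ℝ) / 2 + a) ^ 2 * ((k : ℝ) + ((N : ℝ) - 4) / 2 - a) ^ 2 *
        (2 / ((N : ℝ) - 4 - 2 * a)) ^ 2)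
      ≤ ((0 : ℕ) + (N : ℝ) / 2 + a) ^ 2 * (((0 : ℕ) : ℝ) + ((N : ℝ) - 4) / 2 - a) ^ 2 *
        (2 / ((N : ℝ) - 4 - 2 * a)) ^ 2 := ciInf_le hbdd 0
    _ = (((N : ℝ) + 2 * a) / 2) ^ 2 := by push_cast; rw [h0]
end
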